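/- Explicit lower barrier for the unscaled hydrodynamics: fix N ≥ 1, λ ∈ (0,1), and set H^N(x,y,z) = -(N/λ)((1+λ)/2 (x-y) + (1-λ)/2 (z-y)). Define f(k,t) = 1 - (Nλ)^{2/3} (t - k/N + (Nλ)^{-1/3})_+² - t (Nλ)^{-1/3} for 0 ≤ k ≤ N, t ≥ 0. Then f is a sub-solution of the scheme ∂_t u(k,t) + H^N(u(k-1,t), u(k,t), u(k+1,t)) = 0 with boundary conditions u(0,t) = 0, u(N,t) = 1, u(k,0) = 1; that is, f(0,t) ≤ 0, f(N,t) ≤ 1, f(k,0) ≤ 1, and ∂_t f(k,t) + H^N(f(k-1,t), f(k,t), f(k+1,t)) ≤ 0 for 1 ≤ k ≤ N-1, t ≥ 0. -/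

import Mathlib

open Real

lemma hasDerivAt_maxsq (a t : ℝ) :
    HasDerivAt (fun s : ℝ => max (s - a) 0 ^ 2) (2 * max (t - a) 0) t := by
  rcases lt_trichotomy t a with h | h | h
  · rw [max_eq_right (by linarith : t - a ≤ 0), mul_zero]
    have he : (fun s : ℝ => max (s - a) 0 ^ 2) =ᶠ[nhds t] fun _ => (0:ℝ) := by
      filter_upwards [Iio_mem_nhds h] with s hs
      rw [max_eq_right (by simp only [Set.mem_Iio] at hs; linarith)]
      norm_num
    exact (hasDerivAt_const t (0:ℝ)).congr_of_eventuallyEq he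
  · subst h
    rw [sub_self, max_self, mul_zero]
    rw [hasDerivAt_iff_tendsto_slope]
    have he : (fun s : ℝ => max (s - t) 0) =ᶠ[nhdsWithin t {t}ᶜ]
        slope (fun s : ℝ => max (s - t) 0 ^ 2) t := by
      filter_upwards [self_mem_nhdsWithin] with s hs
      have hst : s - t ≠ 0 := sub_ne_zero.mpr hs
      rw [slope_def_field]
      rcases le_or_gt s t with h' | h'
      · rw [max_eq_right (by linarith)]
        simp [sub_self]
      · rw [max_eq_left (by linarith)]
        field_simp
        simp
    have hcont : Filter.Tendsto (fun s : ℝ => max (s - t) 0) (nhdsWithin t {t}ᶜ) (nhds 0) := by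
      have : Filter.Tendsto (fun s : ℝ => max (s - t) 0) (nhds t) (nhds (max (t - t) 0)) :=
        ((continuous_id.sub continuous_const).max continuous_const).tendsto t
      simpa using this.mono_left nhdsWithin_le_nhds
    exact hcont.congr' he
  · rw [max_eq_left (by linarith : (0:ℝ) ≤ t - a)]
    have hd : HasDerivAt (fun s : ℝ => (s - a) ^ 2) (2 * (t - a)) t := by
      have := ((hasDerivAt_id t).sub_const a).pow 2
      exact this.congr_deriv (by norm_num)
    have he : (fun s : ℝ => max (s - a) 0 ^ 2) =ᶠ[nhds t] fun s => (s - a) ^ 2 := by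
      filter_upwards [Ioi_mem_nhds h] with s hs
      rw [max_eq_left (by simp only [Set.mem_Ioi] at hs; linarith)]
    exact hd.congr_of_eventuallyEq he

set_option maxHeartbeats 1000000 in
/-- The explicit barrier `f` is a sub-solution of the linear discrete scheme. -/
theorem barrier_subsolution (N : ℕ) (hN : 1 ≤ N)
    (lam : ℝ) (hlam : lam ∈ Set.Ioo (0:ℝ) 1)
    (H : ℝ → ℝ → ℝ → ℝ)
    (hH : ∀ x y z : ℝ, H x y z =
      -((N : ℝ) / lam) * ((1 + lam) / 2 * (x - y) + (1 - lam) / 2 * (z - y)))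
    (f : ℕ → ℝ → ℝ)
    (hf : ∀ (k : ℕ) (t : ℝ), f k t =
      1 - ((N : ℝ) * lam) ^ ((2:ℝ)/3) *
            (max (t - (k : ℝ) / N + ((N : ℝ) * lam) ^ (-(1:ℝ)/3)) 0) ^ 2 -
          t * ((N : ℝ) * lam) ^ (-(1:ℝ)/3)) :
    (∀ t : ℝ, 0 ≤ t → f 0 t ≤ 0) ∧
    (∀ t : ℝ, 0 ≤ t → f N t ≤ 1) ∧
    (∀ k : ℕ, k ≤ N → f k 0 ≤ 1) ∧
    (∀ (k : ℕ) (t : ℝ), 1 ≤ k → k ≤ N - 1 → 0 ≤ t →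
      deriv (fun s => f k s) t + H (f (k - 1) t) (f k t) (f (k + 1) t) ≤ 0) := by
  obtain ⟨hl0, hl1⟩ := hlam
  have hn : (0:ℝ) < N := by exact_mod_cast Nat.pos_of_ne_zero (by omega)
  set c : ℝ := ((N:ℝ) * lam) ^ (-(1:ℝ)/3) with hcdef
  set A : ℝ := ((N:ℝ) * lam) ^ ((2:ℝ)/3) with hAdef
  have hP : (0:ℝ) < (N:ℝ) * lam := mul_pos hn hl0
  have hc : 0 < c := Real.rpow_pos_of_pos hP _
  have hA : 0 < A := Real.rpow_pos_of_pos hP _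
  have hAc : A = (N:ℝ) * lam * c := by
    rw [hAdef, hcdef]
    calc ((N:ℝ) * lam) ^ ((2:ℝ)/3) = ((N:ℝ) * lam) ^ ((1:ℝ) + -(1:ℝ)/3) := by norm_num
    _ = ((N:ℝ) * lam) ^ (1:ℝ) * ((N:ℝ) * lam) ^ (-(1:ℝ)/3) := Real.rpow_add hP _ _
    _ = (N:ℝ) * lam * ((N:ℝ) * lam) ^ (-(1:ℝ)/3) := by rw [Real.rpow_one]
  have hAc2 : A * c ^ 2 = 1 := by
    rw [hAdef, hcdef, ← Real.rpow_natCast (((N:ℝ) * lam) ^ (-(1:ℝ)/3)) 2,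
      ← Real.rpow_mul hP.le, ← Real.rpow_add hP]
    norm_num
  have hDf : ∀ (k : ℕ) (t : ℝ),
      HasDerivAt (fun s => f k s) (-(2 * A * max (t - (k:ℝ)/N + c) 0) - c) t := by
    intro k t
    have h0 : (fun s => f k s) = fun s => 1 - A * max (s - ((k:ℝ)/N - c)) 0 ^ 2 - s * c := by
      funext s
      rw [hf, show s - ((k:ℝ)/N - c) = s - (k:ℝ)/N + c from by ring]
    rw [h0]
    have h3 := ((hasDerivAt_const t (1:ℝ)).sub
      ((hasDerivAt_maxsq ((k:ℝ)/N - c) t).const_mul A)).sub ((hasDerivAt_id t).mul_const c)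
    refine h3.congr_deriv ?_
    rw [show t - (k:ℝ)/N + c = t - ((k:ℝ)/N - c) from by ring]
    ring
  refine ⟨?_, ?_, ?_, ?_⟩
  · intro t ht
    rw [hf]
    push_cast
    rw [zero_div, sub_zero, max_eq_left (by linarith : (0:ℝ) ≤ t + c)]
    nlinarith [mul_nonneg (mul_nonneg hA.le ht) ht, mul_nonneg (mul_nonneg hA.le ht) hc.le,
      mul_nonneg ht hc.le]
  · intro t ht
    rw [hf]
    nlinarith [mul_nonneg hA.le (sq_nonneg (max (t - (N:ℝ)/N + c) 0)), mul_nonneg ht hc.le]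
  · intro k hk
    rw [hf]
    nlinarith [mul_nonneg hA.le (sq_nonneg (max ((0:ℝ) - (k:ℝ)/N + c) 0))]
  · intro k t hk1 hkN ht
    have hkc : ((k - 1 : ℕ) : ℝ) = (k:ℝ) - 1 := by
      rw [Nat.cast_sub hk1, Nat.cast_one]
    rw [(hDf k t).deriv, hH, hf (k-1) t, hf k t, hf (k+1) t, hkc]
    push_cast
    rw [show t - ((k:ℝ) - 1)/N + c = (t - (k:ℝ)/N + c) + 1/N from by field_simp; ring,
      show t - ((k:ℝ) + 1)/N + c = (t - (k:ℝ)/N + c) - 1/N from by field_simp; ring]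
    set s := t - (k:ℝ)/N + c with hs
    clear_value s
    have hinv : (0:ℝ) < 1/N := by positivity
    rcases le_or_gt s 0 with h0 | h0
    · rw [max_eq_right h0, max_eq_right (by linarith : s - 1/N ≤ 0)]
      have hM1 : max (s + 1/N) 0 ≤ 1/N := max_le (by linarith) hinv.le
      have hM0 : 0 ≤ max (s + 1/N) 0 := le_max_right _ _
      have key : max (s + 1/N) 0 ^ 2 ≤ (1/N)^2 := by nlinarith
      have hb : (N:ℝ)/lam * ((1+lam)/2) * A * (1/N)^2 = c*(1+lam)/2 := by
        rw [hAc]; field_simp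
      have hmul : (N:ℝ)/lam * ((1+lam)/2) * A * (max (s + 1/N) 0)^2 ≤ c*(1+lam)/2 := by
        rw [← hb]
        have hpos : (0:ℝ) ≤ (N:ℝ)/lam * ((1+lam)/2) * A := by positivity
        nlinarith [mul_le_mul_of_nonneg_left key hpos]
      nlinarith [hmul, hc.le, mul_pos hn hl0]
    · rcases le_or_gt s (1/N) with h1 | h1
      · rw [max_eq_left h0.le, max_eq_left (by linarith : (0:ℝ) ≤ s + 1/N),
          max_eq_right (by linarith : s - 1/N ≤ 0)]
        have hb : (0:ℝ) ≤ c*(1-lam)*((N:ℝ)*s-1)^2/2 := by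
          have : (0:ℝ) ≤ 1 - lam := by linarith
          positivity
        have hkey : (-(2 * A * s) - c) + -((N:ℝ)/lam) * ((1 + lam)/2 *
            ((1 - A*(s+1/N)^2 - t*c) - (1 - A*s^2 - t*c)) + (1 - lam)/2 *
            ((1 - A*(0:ℝ)^2 - t*c) - (1 - A*s^2 - t*c)))
            = -(c*(1-lam)*((N:ℝ)*s-1)^2/2) := by
          rw [hAc]; field_simp; ring
        linarith [hkey.le]
      · rw [max_eq_left h0.le, max_eq_left (by linarith : (0:ℝ) ≤ s + 1/N),
          max_eq_left (by linarith : (0:ℝ) ≤ s - 1/N)]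
        have hkey : (-(2 * A * s) - c) + -((N:ℝ)/lam) * ((1 + lam)/2 *
            ((1 - A*(s+1/N)^2 - t*c) - (1 - A*s^2 - t*c)) + (1 - lam)/2 *
            ((1 - A*(s-1/N)^2 - t*c) - (1 - A*s^2 - t*c))) = 0 := by
          rw [hAc]; field_simp; ring
        linarith [hkey.le]
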